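/- Let f : ℝ^d → ℝ be convex, let x̂ ∈ ℝ^d, and let 0 < λ₁ < λ₂. Suppose x₁ minimizes y ↦ f(y) + (1/(2λ₁))‖y − x̂‖² over ℝ^d and x₂ minimizes y ↦ f(y) + (1/(2λ₂))‖y − x̂‖² over ℝ^d. Then (λ₂ − λ₁)(f(x₂) − f(x₁)) ≤ −‖x₂ − x₁‖². In particular f(x₂) ≤ f(x₁), with strict inequality whenever x₂ ≠ x₁, so the map λ ↦ f(prox_{λf}(x̂)) is strictly decreasing. -/

import Mathlib

private lemma prox_growth {E : Type*} [NormedAddCommGroup E] [InnerProductSpace ℝ E]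
    (f : E → ℝ) (hconv : ConvexOn ℝ Set.univ f) (c : ℝ) (hc : 0 < c) (xhat x y : E)
    (hmin : ∀ z, f x + c * ‖x - xhat‖ ^ 2 ≤ f z + c * ‖z - xhat‖ ^ 2) :
    f x + c * ‖x - xhat‖ ^ 2 + c * ‖y - x‖ ^ 2 ≤ f y + c * ‖y - xhat‖ ^ 2 := by
  set u := x - xhat with hu
  set v := y - x with hv
  have hkey : ∀ t : ℝ, 0 < t → t ≤ 1 →
      f x ≤ f y + c * (2 * inner ℝ u v) + c * t * ‖v‖ ^ 2 := by
    intro t ht ht1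
    have hz := hmin ((1 - t) • x + t • y)
    have hcv := hconv.2 (Set.mem_univ x) (Set.mem_univ y)
        (by linarith : (0:ℝ) ≤ 1 - t) (le_of_lt ht) (by ring)
    have hzdecomp : (1 - t) • x + t • y - xhat = u + t • v := by
      rw [hu, hv]; module
    have hnorm : ‖(1 - t) • x + t • y - xhat‖ ^ 2
        = ‖u‖ ^ 2 + 2 * (t * inner ℝ u v) + t ^ 2 * ‖v‖ ^ 2 := by
      rw [hzdecomp, norm_add_sq_real, real_inner_smul_right, norm_smul, mul_pow]
      simp [abs_of_pos ht]
    rw [hnorm] at hz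
    simp only [smul_eq_mul] at hcv
    have := hz.trans (by linarith [hcv] :
      f ((1 - t) • x + t • y) + c * (‖u‖ ^ 2 + 2 * (t * inner ℝ u v) + t ^ 2 * ‖v‖ ^ 2)
        ≤ (1 - t) * f x + t * f y + c * (‖u‖ ^ 2 + 2 * (t * inner ℝ u v) + t ^ 2 * ‖v‖ ^ 2))
    have ht' : (0:ℝ) < t := ht
    nlinarith [this, sq_nonneg t]
  have hmain : f x ≤ f y + c * (2 * inner ℝ u v) := by
    have heps : ∀ ε : ℝ, 0 < ε → f x ≤ f y + c * (2 * inner ℝ u v) + ε := by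
      intro ε hε
      have hB : (0:ℝ) ≤ c * ‖v‖ ^ 2 := by positivity
      set t : ℝ := min 1 (ε / (c * ‖v‖ ^ 2 + ε)) with ht
      have hden : (0:ℝ) < c * ‖v‖ ^ 2 + ε := by linarith
      have ht0 : 0 < t := lt_min one_pos (div_pos hε hden)
      have ht1 : t ≤ 1 := min_le_left _ _
      have h := hkey t ht0 ht1
      have htle : t ≤ ε / (c * ‖v‖ ^ 2 + ε) := min_le_right _ _
      have : c * t * ‖v‖ ^ 2 ≤ ε := by
        have h2 : c * t * ‖v‖ ^ 2 ≤ c * (ε / (c * ‖v‖ ^ 2 + ε)) * ‖v‖ ^ 2 := by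
          have : 0 ≤ c * ‖v‖ ^ 2 := hB
          nlinarith
        have h3 : c * (ε / (c * ‖v‖ ^ 2 + ε)) * ‖v‖ ^ 2 ≤ ε := by
          have he : c * (ε / (c * ‖v‖ ^ 2 + ε)) * ‖v‖ ^ 2
              = (c * ‖v‖ ^ 2) * ε / (c * ‖v‖ ^ 2 + ε) := by ring
          rw [he, div_le_iff₀ hden]
          nlinarith
        linarith
      linarith
    by_contra hcon
    push_neg at hcon
    have := heps ((f x - (f y + c * (2 * inner ℝ u v))) / 2) (by linarith)
    linarith
  have hyx : y - xhat = u + v := by rw [hu, hv]; abel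
  have : ‖y - xhat‖ ^ 2 = ‖u‖ ^ 2 + 2 * inner ℝ u v + ‖v‖ ^ 2 := by
    rw [hyx, norm_add_sq_real]
  rw [this]
  nlinarith [hmain]

/-- Monotonicity of the proximal point in the proximal parameter: if `x₁` and `x₂` are
proximal points of the convex function `f` at `x̂` with parameters `0 < λ₁ < λ₂`, then
`(λ₂ - λ₁)(f x₂ - f x₁) ≤ -‖x₂ - x₁‖²`; in particular `f x₂ ≤ f x₁` with strict inequality
when `x₂ ≠ x₁`. -/
theorem stmt_5 {d : ℕ} (f : EuclideanSpace ℝ (Fin d) → ℝ)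
    (hconv : ConvexOn ℝ Set.univ f)
    (xhat : EuclideanSpace ℝ (Fin d)) (lam₁ lam₂ : ℝ) (h1 : 0 < lam₁) (h12 : lam₁ < lam₂)
    (x₁ x₂ : EuclideanSpace ℝ (Fin d))
    (hx₁ : ∀ y, f x₁ + (1 / (2 * lam₁)) * ‖x₁ - xhat‖ ^ 2
        ≤ f y + (1 / (2 * lam₁)) * ‖y - xhat‖ ^ 2)
    (hx₂ : ∀ y, f x₂ + (1 / (2 * lam₂)) * ‖x₂ - xhat‖ ^ 2
        ≤ f y + (1 / (2 * lam₂)) * ‖y - xhat‖ ^ 2) :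
    (lam₂ - lam₁) * (f x₂ - f x₁) ≤ -‖x₂ - x₁‖ ^ 2 ∧
      f x₂ ≤ f x₁ ∧ (x₂ ≠ x₁ → f x₂ < f x₁) := by
  have h2 : 0 < lam₂ := h1.trans h12
  have hc₁ : (0:ℝ) < 1 / (2 * lam₁) := by positivity
  have hc₂ : (0:ℝ) < 1 / (2 * lam₂) := by positivity
  have hI := prox_growth f hconv (1 / (2 * lam₁)) hc₁ xhat x₁ x₂ hx₁
  have hII := prox_growth f hconv (1 / (2 * lam₂)) hc₂ xhat x₂ x₁ hx₂
  have hnorm : ‖x₁ - x₂‖ = ‖x₂ - x₁‖ := norm_sub_rev _ _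
  rw [hnorm] at hII
  -- multiply hI by 2λ₁ and hII by 2λ₂ and add
  have e1 : (2 * lam₁) * (1 / (2 * lam₁)) = 1 := by field_simp
  have e2 : (2 * lam₂) * (1 / (2 * lam₂)) = 1 := by field_simp
  have hmain : (lam₂ - lam₁) * (f x₂ - f x₁) ≤ -‖x₂ - x₁‖ ^ 2 := by
    nlinarith [mul_le_mul_of_nonneg_left hI (by linarith : (0:ℝ) ≤ 2 * lam₁),
      mul_le_mul_of_nonneg_left hII (by linarith : (0:ℝ) ≤ 2 * lam₂)]
  refine ⟨hmain, ?_, ?_⟩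
  · nlinarith [sq_nonneg ‖x₂ - x₁‖]
  · intro hne
    have : 0 < ‖x₂ - x₁‖ := by
      simpa [sub_eq_zero] using (norm_pos_iff.mpr (sub_ne_zero.mpr hne))
    nlinarith
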